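/- Fix an integer k ≥ 17 and set c = (2/ln 2)·(ln k)/k. Then for all sufficiently large n there exists a bipartite graph G ⊆ K_{k,n} (with parts of sizes k and n) such that neither G nor its bipartite complement contains a complete bipartite subgraph K_{a,b} with a = ⌈ck⌉ and b = ⌈cn⌉ (a vertices from the part of size k, b vertices from the part of size n). -/

import Mathlib

open Finset


lemma count_periodic (P : ℕ → Prop) [DecidablePred P] (p n : ℕ) (hp : 0 < p)
    (hP : ∀ m, P m → P (m % p)) :
    ((range n).filter P).card ≤ (n / p + 1) * ((range p).filter P).card := by
  have h := Finset.card_le_card_of_injOn (s := (range n).filter P)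
    (t := (range (n / p + 1)) ×ˢ ((range p).filter P)) (fun m => (m / p, m % p)) ?_ ?_
  · simpa [Finset.card_product] using h
  · intro m hm
    simp only [Finset.mem_coe, mem_filter, mem_range] at hm
    simp only [Finset.mem_coe, Finset.mem_product, mem_filter, mem_range]
    exact ⟨Nat.lt_succ_of_le (Nat.div_le_div_right hm.1.le), Nat.mod_lt _ hp, hP m hm.2⟩
  · intro m₁ _ m₂ _ h
    have h1 : m₁ / p = m₂ / p := congrArg Prod.fst h
    have h2 : m₁ % p = m₂ % p := congrArg Prod.snd h
    have e1 := Nat.div_add_mod m₁ p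
    have e2 := Nat.div_add_mod m₂ p
    rw [h1, h2] at e1
    omega

lemma bit_count (k : ℕ) (bv : Bool) (A : Finset (Fin k)) :
    2 ^ A.card *
      ((range (2 ^ k)).filter (fun m => ∀ i ∈ A, m.testBit i.val = bv)).card = 2 ^ k := by
  classical
  induction A using Finset.induction_on with
  | empty => simp
  | @insert i A hi ih =>
    set T := (range (2 ^ k)).filter (fun m => ∀ i' ∈ A, m.testBit i'.val = bv) with hT
    have hsplit : (range (2 ^ k)).filter (fun m => ∀ i' ∈ insert i A, m.testBit i'.val = bv)
        = T.filter (fun m => m.testBit i.val = bv) := by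
      rw [hT, Finset.filter_filter]
      apply Finset.filter_congr
      intro m _
      simp only [Finset.mem_insert, forall_eq_or_imp]
      tauto
    have hbij : (T.filter (fun m => m.testBit i.val = bv)).card
        = (T.filter (fun m => ¬ m.testBit i.val = bv)).card := by
      refine Finset.card_bij' (fun m _ => m ^^^ 2 ^ i.val) (fun m _ => m ^^^ 2 ^ i.val) ?_ ?_ ?_ ?_
      · intro m hm
        simp only [mem_filter, hT, mem_range] at hm ⊢
        obtain ⟨⟨hlt, hbits⟩, hbi⟩ := hm
        refine ⟨⟨Nat.xor_lt_two_pow hlt (Nat.pow_lt_pow_right one_lt_two i.isLt), ?_⟩, ?_⟩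
        · intro i' hi'
          have hne : i'.val ≠ i.val := fun hv => hi (Fin.val_injective hv ▸ hi')
          rw [Nat.testBit_xor, Nat.testBit_two_pow_of_ne (Ne.symm hne)]
          simp [hbits i' hi']
        · rw [Nat.testBit_xor, Nat.testBit_two_pow_self]
          simp [hbi]
      · intro m hm
        simp only [mem_filter, hT, mem_range] at hm ⊢
        obtain ⟨⟨hlt, hbits⟩, hbi⟩ := hm
        refine ⟨⟨Nat.xor_lt_two_pow hlt (Nat.pow_lt_pow_right one_lt_two i.isLt), ?_⟩, ?_⟩
        · intro i' hi'
          have hne : i'.val ≠ i.val := fun hv => hi (Fin.val_injective hv ▸ hi')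
          rw [Nat.testBit_xor, Nat.testBit_two_pow_of_ne (Ne.symm hne)]
          simp [hbits i' hi']
        · rw [Nat.testBit_xor, Nat.testBit_two_pow_self]
          revert hbi
          cases m.testBit i.val <;> cases bv <;> simp
      · intro m _; exact xor_cancel_right _ _
      · intro m _; exact xor_cancel_right _ _
    have hcard : T.card = 2 * (T.filter (fun m => m.testBit i.val = bv)).card := by
      have := Finset.card_filter_add_card_filter_not
        (s := T) (p := fun m => m.testBit i.val = bv)
      omega
    rw [hsplit, Finset.card_insert_of_notMem hi]
    rw [hT] at ih
    rw [hcard] at ih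
    calc 2 ^ (A.card + 1) * (T.filter (fun m => m.testBit i.val = bv)).card
        = 2 ^ A.card * (2 * (T.filter (fun m => m.testBit i.val = bv)).card) := by ring
      _ = 2 ^ k := ih

lemma count_bound (k n : ℕ) (bv : Bool) (A : Finset (Fin k)) :
    ((range n).filter (fun m => ∀ i ∈ A, m.testBit i.val = bv)).card
      ≤ (n / 2 ^ k + 1) * 2 ^ (k - A.card) := by
  classical
  have hak : A.card ≤ k := by simpa using Finset.card_le_card (Finset.subset_univ A)
  have hper : ∀ m, (∀ i ∈ A, m.testBit i.val = bv) →
      (∀ i ∈ A, (m % 2 ^ k).testBit i.val = bv) := by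
    intro m hm i hiA
    rw [Nat.testBit_mod_two_pow]
    simp [i.isLt, hm i hiA]
  have h1 := count_periodic (fun m => ∀ i ∈ A, m.testBit i.val = bv) (2 ^ k) n
    (Nat.pow_pos (by norm_num)) hper
  have h2 := bit_count k bv A
  have h3 : ((range (2 ^ k)).filter (fun m => ∀ i ∈ A, m.testBit i.val = bv)).card
      = 2 ^ (k - A.card) := by
    have : 2 ^ A.card * 2 ^ (k - A.card) = 2 ^ k := by
      rw [← pow_add, Nat.add_sub_cancel' hak]
    have hpos : 0 < 2 ^ A.card := Nat.pow_pos (by norm_num)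
    exact Nat.eq_of_mul_eq_mul_left hpos (by omega)
  rw [h3] at h1
  exact h1


lemma sq_le_two_pow (k : ℕ) (h : 5 ≤ k) : k ^ 2 ≤ 2 ^ k := by
  induction k with
  | zero => omega
  | succ m ih =>
    rcases Nat.lt_or_ge m 5 with hm | hm
    · have h4 : 4 ≤ m := by omega
      interval_cases m
      norm_num
    · have h1 := ih hm
      have h2 : 2 * m + 1 ≤ m ^ 2 := by nlinarith
      calc (m + 1) ^ 2 = m ^ 2 + (2 * m + 1) := by ring
        _ ≤ 2 ^ m + 2 ^ m := by omega
        _ = 2 ^ (m + 1) := by ring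

/-- fix `k ≥ 17` and `c = (2/ln 2)·(ln k)/k`.  For all sufficiently
large `n` there is a bipartite graph `E` between parts of sizes `k` and `n` such
that neither `E` nor its bipartite complement contains `K_{a,b}` with `a = ⌈ck⌉`,
`b = ⌈cn⌉`. -/
theorem stmt_16 (k : ℕ) (hk : 17 ≤ k) :
    ∃ N : ℕ, ∀ n : ℕ, N ≤ n →
      ∃ E : Fin k → Fin n → Prop,
        ∀ (A : Finset (Fin k)) (B : Finset (Fin n)),
          A.card = ⌈2 / Real.log 2 * (Real.log k / k) * k⌉₊ →
          B.card = ⌈2 / Real.log 2 * (Real.log k / k) * n⌉₊ →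
          ¬(∀ i ∈ A, ∀ j ∈ B, E i j) ∧ ¬(∀ i ∈ A, ∀ j ∈ B, ¬E i j) := by
  classical
  set c : ℝ := 2 / Real.log 2 * (Real.log k / k) with hc
  have hk0 : (0:ℝ) < k := by exact_mod_cast (by omega : 0 < k)
  have hk17 : (17:ℝ) ≤ k := by exact_mod_cast hk
  have hlog2 : 0 < Real.log 2 := Real.log_pos (by norm_num)
  have hlogk2 : Real.log 2 ≤ Real.log k := Real.log_le_log (by norm_num) (by linarith)
  have hlogk0 : 0 < Real.log k := lt_of_lt_of_le hlog2 hlogk2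
  have hck : c * k = 2 * Real.log k / Real.log 2 := by
    rw [hc]; field_simp
  have hsq : ((k:ℝ)) ^ 2 ≤ 2 ^ k := by
    exact_mod_cast sq_le_two_pow k (by omega)
  have h2log : 2 * Real.log k ≤ k * Real.log 2 := by
    have h := Real.log_le_log (by positivity) hsq
    rwa [Real.log_pow, Real.log_pow, Nat.cast_ofNat] at h
  set a := ⌈c * (k:ℝ)⌉₊ with ha
  have ha_le : a ≤ k := by
    rw [ha]
    apply Nat.ceil_le.mpr
    rw [hck, div_le_iff₀ hlog2]
    linarith
  have haR : c * k ≤ (a:ℝ) := Nat.le_ceil _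
  have hk2a : (k:ℝ) ^ 2 ≤ 2 ^ a := by
    have hexp : Real.exp (2 * Real.log k) ≤ Real.exp ((a:ℝ) * Real.log 2) := by
      apply Real.exp_le_exp.mpr
      have h1 : 2 * Real.log k = c * k * Real.log 2 := by
        rw [hck]; field_simp
      rw [h1]
      exact mul_le_mul_of_nonneg_right haR hlog2.le
    have e1 : Real.exp (2 * Real.log k) = (k:ℝ) ^ 2 := by
      rw [show (2:ℝ) * Real.log k = ((2:ℕ):ℝ) * Real.log k by norm_num,
        Real.exp_nat_mul, Real.exp_log hk0]
    have e2 : Real.exp ((a:ℝ) * Real.log 2) = 2 ^ a := by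
      rw [Real.exp_nat_mul, Real.exp_log (by norm_num)]
    rw [← e1, ← e2]; exact hexp
  have hc2 : 2 / (k:ℝ) ≤ c := by
    have h1 : 1 ≤ Real.log k / Real.log 2 := (one_le_div hlog2).mpr hlogk2
    calc 2 / (k:ℝ) = 2 / k * 1 := by ring
      _ ≤ 2 / k * (Real.log k / Real.log 2) := by
          apply mul_le_mul_of_nonneg_left h1 (by positivity)
      _ = c := by rw [hc]; ring
  refine ⟨2 ^ k + 1, fun n hn => ?_⟩
  have hnk : 2 ^ k < n := by omega
  have hnR : (2:ℝ) ^ k < n := by exact_mod_cast hnk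
  have hn0 : (0:ℝ) < n := lt_trans (by positivity) hnR
  refine ⟨fun i j => (j : ℕ).testBit i.val = true, fun A B hA hB => ?_⟩
  have hbR : c * n ≤ (B.card : ℝ) := by
    rw [hB]; exact Nat.le_ceil _
  -- key numeric estimate
  have key : (((n / 2 ^ k + 1) * 2 ^ (k - a) : ℕ) : ℝ) < B.card := by
    have h2a0 : (0:ℝ) < 2 ^ a := by positivity
    have hstep1 : (((n / 2 ^ k + 1) * 2 ^ (k - a) : ℕ) : ℝ)
        ≤ ((n:ℝ) / 2 ^ k + 1) * (2 ^ k / 2 ^ a) := by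
      push_cast
      have h1 : ((n / 2 ^ k : ℕ) : ℝ) ≤ (n:ℝ) / 2 ^ k := by
        calc ((n / 2 ^ k : ℕ) : ℝ) ≤ (n:ℝ) / ((2 ^ k : ℕ):ℝ) := Nat.cast_div_le
          _ = (n:ℝ) / 2 ^ k := by push_cast; ring
      have h2 : ((2:ℝ)) ^ (k - a) = 2 ^ k / 2 ^ a := by
        rw [eq_div_iff (ne_of_gt h2a0), ← pow_add, Nat.sub_add_cancel ha_le]
      rw [← h2]
      apply mul_le_mul_of_nonneg_right _ (by positivity)
      push_cast at h1 ⊢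
      linarith
    have hstep2 : ((n:ℝ) / 2 ^ k + 1) * (2 ^ k / 2 ^ a) = (n:ℝ) / 2 ^ a + 2 ^ k / 2 ^ a := by
      field_simp
    have hstep3 : (n:ℝ) / 2 ^ a + 2 ^ k / 2 ^ a ≤ (n:ℝ) / k ^ 2 + 2 ^ k / k ^ 2 := by
      gcongr <;> first | positivity | exact hk2a
    have hstep4 : (n:ℝ) / k ^ 2 + 2 ^ k / k ^ 2 < 2 / k * n := by
      rw [← add_div, div_lt_iff₀ (by positivity)]
      have : (2:ℝ) / k * n * k ^ 2 = 2 * k * n := by field_simp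
      rw [this]
      nlinarith [hnR, hk17, hn0]
    have hstep5 : 2 / (k:ℝ) * n ≤ c * n := mul_le_mul_of_nonneg_right hc2 hn0.le
    linarith
  have keyN : ((n / 2 ^ k + 1) * 2 ^ (k - a) : ℕ) < B.card := by exact_mod_cast key
  have main : ∀ bv : Bool, ¬(∀ i ∈ A, ∀ j ∈ B, (j:ℕ).testBit i.val = bv) := by
    intro bv H
    have hsub : B.image Fin.val ⊆
        (range n).filter (fun m => ∀ i ∈ A, m.testBit i.val = bv) := by
      intro m hm
      simp only [Finset.mem_image] at hm
      obtain ⟨j, hj, rfl⟩ := hm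
      simp only [mem_filter, mem_range]
      exact ⟨j.isLt, fun i hi => H i hi j hj⟩
    have hcard : B.card ≤
        ((range n).filter (fun m => ∀ i ∈ A, m.testBit i.val = bv)).card := by
      rw [← Finset.card_image_of_injective B Fin.val_injective]
      exact Finset.card_le_card hsub
    have hcb := count_bound k n bv A
    rw [hA] at hcb
    omega
  constructor
  · intro H
    exact main true (fun i hi j hj => H i hi j hj)
  · intro H
    refine main false (fun i hi j hj => ?_)
    have := H i hi j hj
    simpa using this
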